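/- Let A be a Φ-local Φ-ring with maximal ideal 𝔫, let S be the multiplicative set of elements of A generating an admissible ideal, and let 𝔪 = ⋂_{s ∈ S} s𝔫. Then S = A ∖ 𝔪, so an ideal of A is admissible if and only if it is generated by an element of A ∖ 𝔪. -/

import Mathlib

/-- A ring with constructible supports (a `Φ`-ring): a commutative ring together with a
family of finitely generated ideals (the *admissible* ideals) containing the unit ideal,
stable under products, and such that any finitely generated ideal containing an admissible
ideal is admissible. -/
structure PhiRing (A : Type*) [CommRing A] where
  adm : Set (Ideal A)
  fg_of_mem : ∀ I ∈ adm, I.FG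
  top_mem : ⊤ ∈ adm
  mul_mem : ∀ I ∈ adm, ∀ J ∈ adm, I * J ∈ adm
  enlarge_mem : ∀ I ∈ adm, ∀ J : Ideal A, J.FG → I ≤ J → J ∈ adm

/-- The multiplicative set of elements of `A` generating an admissible ideal. -/
def PhiRing.S {A : Type*} [CommRing A] (Φ : PhiRing A) : Submonoid A where
  carrier := {a : A | Ideal.span {a} ∈ Φ.adm}
  one_mem' := by
    show Ideal.span {(1 : A)} ∈ Φ.adm
    rw [Ideal.span_singleton_one]
    exact Φ.top_mem
  mul_mem' := by
    intro a b ha hb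
    show Ideal.span {a * b} ∈ Φ.adm
    rw [← Ideal.span_singleton_mul_span_singleton]
    exact Φ.mul_mem _ ha _ hb

/-- `A` is `Φ`-local if (it is local and) every admissible ideal is invertible;
in a local ring, an ideal is invertible iff it is generated by a single nonzerodivisor. -/
def PhiRing.IsPhiLocal {A : Type*} [CommRing A] (Φ : PhiRing A) : Prop :=
  ∀ I ∈ Φ.adm, ∃ a ∈ nonZeroDivisors A, I = Ideal.span {a}

/-- Let `A` be a `Φ`-local `Φ`-ring with maximal ideal `𝔫`, `S` the multiplicative set of
elements generating an admissible ideal, and `𝔪 = ⋂_{s ∈ S} s𝔫`.  Then `S = A ∖ 𝔪`, so an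
ideal of `A` is admissible if and only if it is generated by an element of `A ∖ 𝔪`. -/
theorem PhiRing.S_eq_compl_m
    {A : Type*} [CommRing A] [IsLocalRing A] (Φ : PhiRing A) (hΦ : Φ.IsPhiLocal)
    (𝔪 : Ideal A)
    (h𝔪 : 𝔪 = ⨅ s ∈ Φ.S, Ideal.span {s} * IsLocalRing.maximalIdeal A) :
    (↑Φ.S : Set A) = {a : A | a ∉ 𝔪} ∧
      (∀ I : Ideal A, I ∈ Φ.adm ↔ ∃ a : A, a ∉ 𝔪 ∧ I = Ideal.span {a}) := by
  have hSm : ∀ a ∈ Φ.S, a ∉ 𝔪 := by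
    intro a ha hmem
    rw [h𝔪] at hmem
    have h2 := Ideal.mem_iInf.mp (Ideal.mem_iInf.mp hmem a) ha
    rw [Ideal.mem_span_singleton_mul] at h2
    obtain ⟨n, hn, hna⟩ := h2
    have hu : IsUnit (1 - n) :=
      IsLocalRing.isUnit_one_sub_self_of_mem_nonunits n
        (IsLocalRing.mem_maximalIdeal n |>.mp hn)
    have ha0 : a * (1 - n) = 0 := by linear_combination -hna
    have haz : a = 0 := (IsUnit.mul_left_eq_zero hu).mp ha0
    obtain ⟨b, hb, heq⟩ := hΦ _ ha
    have hbz : b = 0 := by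
      have : b ∈ Ideal.span {a} := heq ▸ Ideal.mem_span_singleton_self b
      rw [haz, Set.singleton_zero, Ideal.span_zero] at this; exact (Ideal.mem_bot).mp this
    exact zero_notMem_nonZeroDivisors (hbz ▸ hb)
  have hmS : ∀ a : A, a ∉ 𝔪 → a ∈ Φ.S := by
    intro a hma
    simp only [h𝔪, Ideal.mem_iInf, not_forall] at hma
    obtain ⟨s, hs, hsa⟩ := hma
    set J : Ideal A := Ideal.span {s, a} with hJdef
    have hJ : J ∈ Φ.adm := by
      refine Φ.enlarge_mem _ hs _ (Submodule.fg_span (Set.toFinite _)) ?_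
      exact Ideal.span_mono (by simp)
    obtain ⟨b, hbnzd, hJb⟩ := hΦ _ hJ
    have hsJ : s ∈ J := Ideal.subset_span (by simp)
    have haJ : a ∈ J := Ideal.subset_span (by simp)
    obtain ⟨c, hc⟩ := Ideal.mem_span_singleton'.mp (hJb ▸ hsJ)
    obtain ⟨d, hd⟩ := Ideal.mem_span_singleton'.mp (hJb ▸ haJ)
    have hbJ : b ∈ J := by rw [hJb]; exact Ideal.mem_span_singleton_self b
    obtain ⟨x, y, hxy⟩ := Ideal.mem_span_pair.mp hbJ
    have hone : x * c + y * d = 1 := by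
      have hz : (x * c + y * d - 1) * b = 0 := by
        linear_combination x * hc + y * hd + hxy
      have h0 := (mem_nonZeroDivisors_iff.mp hbnzd).2 _ hz
      linear_combination h0
    rcases IsLocalRing.isUnit_or_isUnit_of_add_one hone with h | h
    · have hcu : IsUnit c := isUnit_of_mul_isUnit_right h
      have hsb : Ideal.span {b} = Ideal.span {s} := by
        rw [← hc]; exact (Ideal.span_singleton_mul_left_unit hcu b).symm
      have haS : a ∈ Ideal.span {s} := hsb ▸ (hJb ▸ haJ)
      obtain ⟨t, ht⟩ := Ideal.mem_span_singleton.mp haS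
      have htu : IsUnit t := by
        by_contra htn
        exact hsa (Ideal.mem_span_singleton_mul.mpr
          ⟨t, (IsLocalRing.mem_maximalIdeal t).mpr htn, ht.symm⟩)
      show Ideal.span {a} ∈ Φ.adm
      have hAs : Ideal.span {a} = Ideal.span {s} := by
        rw [ht]; exact Ideal.span_singleton_mul_right_unit htu s
      rw [hAs]; exact hs
    · have hdu : IsUnit d := isUnit_of_mul_isUnit_right h
      have hab : Ideal.span {a} = Ideal.span {b} := by
        rw [← hd]; exact Ideal.span_singleton_mul_left_unit hdu b
      show Ideal.span {a} ∈ Φ.adm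
      rw [hab, ← hJb]; exact hJ
  constructor
  · ext a
    simp only [Set.mem_setOf_eq, SetLike.mem_coe]
    exact ⟨hSm a, hmS a⟩
  · intro I
    constructor
    · intro hI
      obtain ⟨b, hbnzd, hIb⟩ := hΦ _ hI
      exact ⟨b, hSm b (show Ideal.span {b} ∈ Φ.adm from hIb ▸ hI), hIb⟩
    · rintro ⟨a, hma, rfl⟩
      exact hmS a hma
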